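/- Let c = Σ_{k≥0} k! x1^k be the Ferfera series. Then for every word η ∈ X*, the antipode S of the output feedback Hopf algebra satisfies (S a_{η x1})(−c) = deg(a_η) · (S a_η)(−c) and (S a_{η x0})(−c) = deg(a_η) · (S a_η)(−c), where deg(a_η) = 2|η|_{x0} + |η|_{x1} + 1. -/

import Mathlib

open scoped TensorProduct

noncomputable section

namespace Paper

/-- Words over the alphabet `X = {x0, x1}`, encoded as lists over `Fin 2`
(`0` stands for the letter `x0` and `1` for the letter `x1`). -/
abbrev Word : Type := List (Fin 2)

/-- Formal power series `ℝ⟨⟨X⟩⟩`, given by their coefficient functions `η ↦ ⟨c,η⟩`. -/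
abbrev Series : Type := Word → ℝ

/-- The left shift `x_i⁻¹(c)`. -/
def lshift (i : Fin 2) (c : Series) : Series := fun w => c (i :: w)

/-- Left concatenation `x_i c` of the letter `x_i` onto every word of `c`. -/
def lconcat (i : Fin 2) (c : Series) : Series := fun w =>
  match w with
  | [] => 0
  | j :: v => if j = i then c v else 0

/-- Right concatenation `p x_i` of the letter `x_i` onto every word of `p`. -/
def rconcat {R : Type*} [Zero R] (i : Fin 2) (p : Word → R) : Word → R := fun w =>
  if w.getLast? = some i then p w.dropLast else 0

/-- The series of a single word. -/
def ind (η : Word) : Series := fun w => if w = η then 1 else 0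

/-- The empty word as a series, the unit `∅` (often written `1`). -/
def one : Series := ind []

/-- The shuffle product, defined coefficientwise by the recursion
`⟨c ⧢ d, ∅⟩ = ⟨c,∅⟩⟨d,∅⟩` and `⟨c ⧢ d, x_i w⟩ = ⟨x_i⁻¹(c) ⧢ d, w⟩ + ⟨c ⧢ x_i⁻¹(d), w⟩`,
which is the bilinear (and ultrametrically continuous) extension of the recursive
shuffle product of words. -/
def shuffleFn : Series → Series → Word → ℝ
  | c, d, [] => c [] * d []
  | c, d, i :: w => shuffleFn (lshift i c) d w + shuffleFn c (lshift i d) w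

/-- The shuffle product on `ℝ⟨⟨X⟩⟩`. -/
def sh (c d : Series) : Series := shuffleFn c d

/-- The map `φ_d(x_i)` for the modified composition product:
`φ_d(x0)(e) = x0 e` and `φ_d(x1)(e) = x1 e + x0 (d ⧢ e)`. -/
def phiLetter (d : Series) (i : Fin 2) (e : Series) : Series :=
  if i = 0 then lconcat 0 e else lconcat 1 e + lconcat 0 (sh d e)

/-- `φ_d(η)`, the algebra-homomorphism extension determined by
`φ_d(x_i η) = φ_d(x_i) ∘ φ_d(η)` and `φ_d(∅) = id`. -/
def phi (d : Series) : Word → Series → Series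
  | [], e => e
  | i :: η, e => phiLetter d i (phi d η e)

/-- The modified composition product `c ∘̃ d = Σ_η ⟨c,η⟩ φ_d(η)(1)`. -/
def mcomp (c d : Series) : Series := fun w => ∑' η : Word, c η * phi d η one w

/-- The map `ψ_d(x_i)` for the composition product:
`ψ_d(x0)(e) = x0 e` and `ψ_d(x1)(e) = x0 (d ⧢ e)`. -/
def psiLetter (d : Series) (i : Fin 2) (e : Series) : Series :=
  if i = 0 then lconcat 0 e else lconcat 0 (sh d e)

/-- `ψ_d(η)`, determined by `ψ_d(x_i η) = ψ_d(x_i) ∘ ψ_d(η)` and `ψ_d(∅) = id`. -/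
def psi (d : Series) : Word → Series → Series
  | [], e => e
  | i :: η, e => psiLetter d i (psi d η e)

/-- The composition product `c ∘ d = Σ_η ⟨c,η⟩ ψ_d(η)(1)`. -/
def comp (c d : Series) : Series := fun w => ∑' η : Word, c η * psi d η one w

/-- The group operation on `ℝ⟨⟨X_δ⟩⟩ = {δ + c}`, transported to the `c`-parts:
`c_δ ∘ d_δ = δ + (d + c ∘̃ d)`. -/
def gop (c d : Series) : Series := d + mcomp c d

/-- The Ferfera series `c = Σ_{k ≥ 0} k! x1^k`. -/
def ferfera : Series := fun w =>
  if w = List.replicate w.length (1 : Fin 2) then (Nat.factorial w.length : ℝ) else 0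

/-- The degree of a word, `deg(η) = 2|η|_{x0} + |η|_{x1} + 1`. -/
def degW (η : Word) : ℕ := 2 * η.count 0 + η.count 1 + 1

/-- The output feedback Hopf algebra `H`: the free unital commutative `ℝ`-algebra on the
coordinate functions `a_η`, realized as polynomials in commuting variables indexed by words. -/
abbrev H : Type := MvPolynomial Word ℝ

/-- The coordinate function `a_η`. -/
def aw (η : Word) : H := MvPolynomial.X η

/-- Character (pointwise) evaluation of elements of `H` at a series `c`:
`(a_{η₁} ⋯ a_{η_l})(c) = ⟨c,η₁⟩ ⋯ ⟨c,η_l⟩`, extended as an algebra map. -/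
def evalS (c : Series) : H →ₐ[ℝ] ℝ := MvPolynomial.aeval c

/-- Evaluation of `H ⊗ H` at a pair of series: `(p ⊗ q)(c,d) = p(c) q(d)`. -/
def evalPair (c d : Series) : H ⊗[ℝ] H →ₗ[ℝ] ℝ :=
  (LinearMap.mul' ℝ ℝ).comp (TensorProduct.map (evalS c).toLinearMap (evalS d).toLinearMap)

/-- The counit `ε` of `H`: `ε(a_η) = 0`, `ε(1) = 1`. -/
def counit : H →ₐ[ℝ] ℝ := evalS 0

/-- The defining property of the full coproduct `Δ` of the output feedback Hopf algebra:
`Δ a_η = Δ̃ a_η + 1 ⊗ a_η` where `Δ̃ a_η (c,d) = ⟨c ∘̃ d, η⟩`, i.e.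
`(Δ a_η)(c,d) = ⟨c ∘̃ d, η⟩ + ⟨d, η⟩` for all series `c, d`; `Δ` is an algebra morphism. -/
def IsFBCoproduct (Δ : H →ₐ[ℝ] (H ⊗[ℝ] H)) : Prop :=
  ∀ (η : Word) (c d : Series), evalPair c d (Δ (aw η)) = mcomp c d η + d η

/-- `S` is an antipode for the coproduct `Δ` (with counit `ε`):
`μ ∘ (S ⊗ id) ∘ Δ = 1·ε = μ ∘ (id ⊗ S) ∘ Δ`. -/
def IsAntipode (Δ : H →ₐ[ℝ] (H ⊗[ℝ] H)) (S : H →ₗ[ℝ] H) : Prop :=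
  (∀ p : H, LinearMap.mul' ℝ H (TensorProduct.map S LinearMap.id (Δ p)) = counit p • 1) ∧
  (∀ p : H, LinearMap.mul' ℝ H (TensorProduct.map LinearMap.id S (Δ p)) = counit p • 1)

/-- The right-augmentation operator `θ̃_i`, the derivation on `H` with `θ̃_i(a_η) = a_{η x_i}`. -/
def thetaR (i : Fin 2) : Derivation ℝ H H :=
  MvPolynomial.mkDerivation ℝ fun η => aw (η ++ [i])

/-- The left-augmentation operator `θ_i`, the derivation on `H` with `θ_i(a_η) = a_{x_i η}`. -/
def thetaL (i : Fin 2) : Derivation ℝ H H :=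
  MvPolynomial.mkDerivation ℝ fun η => aw (i :: η)

/-- The multiplication operator `κ_∅(h) = h · a_∅`. -/
def kappaE : H →ₗ[ℝ] H := LinearMap.mulRight ℝ (aw [])

/-- The shuffle coefficient `⟨ξ ⧢ ν, η⟩`. -/
def shCoeff (ξ ν η : Word) : ℝ := sh (ind ξ) (ind ν) η

/-- The finite set of words of length `n`. -/
def wordsLen (n : ℕ) : Finset Word :=
  (Finset.univ : Finset (Fin n → Fin 2)).image List.ofFn

/-- The deshuffle coproduct `Δ_⧢ a_η = Σ_{ξ,ν} ⟨ξ ⧢ ν, η⟩ a_ξ ⊗ a_ν`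
(the unique coproduct satisfying `Δ_⧢ a_∅ = a_∅ ⊗ a_∅` and the coderivation recursions
with respect to the augmentation operators). -/
def deshuffle (η : Word) : H ⊗[ℝ] H :=
  ∑ k ∈ Finset.range (η.length + 1), ∑ ξ ∈ wordsLen k, ∑ ν ∈ wordsLen (η.length - k),
    shCoeff ξ ν η • (aw ξ ⊗ₜ[ℝ] aw ν)

/-- Iterated integrals: `E_∅[u](t) = 1`, `E_{x_i η}[u](t) = ∫₀ᵗ u_i(s) E_η[u](s) ds`. -/
def E (u : Fin 2 → ℝ → ℝ) : Word → ℝ → ℝ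
  | [], _ => 1
  | i :: η, t => ∫ s in (0:ℝ)..t, u i s * E u η s

end Paper

namespace Paper

/-! ### Basic unfolding lemmas -/

lemma fin2_cases (i : Fin 2) : i = 0 ∨ i = 1 := by omega

lemma one_nil : one [] = 1 := by simp [one, ind]

lemma one_cons (i : Fin 2) (v : Word) : one (i :: v) = 0 := by simp [one, ind]

lemma lconcat_nil (i : Fin 2) (f : Series) : lconcat i f [] = 0 := rfl

lemma lconcat_cons (i j : Fin 2) (f : Series) (v : Word) :
    lconcat i f (j :: v) = if j = i then f v else 0 := rfl

lemma shuffleFn_nil (c d : Series) : shuffleFn c d [] = c [] * d [] := rfl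

lemma shuffleFn_cons (c d : Series) (i : Fin 2) (w : Word) :
    shuffleFn c d (i :: w) = shuffleFn (lshift i c) d w + shuffleFn c (lshift i d) w := rfl

lemma phi_nil' (d : Series) (f : Series) : phi d [] f = f := rfl

lemma phi_cons (d : Series) (i : Fin 2) (ξ : Word) (f : Series) :
    phi d (i :: ξ) f = phiLetter d i (phi d ξ f) := rfl

lemma phiLetter_zero (d f : Series) : phiLetter d 0 f = lconcat 0 f := if_pos rfl

lemma phiLetter_one (d f : Series) :
    phiLetter d 1 f = lconcat 1 f + lconcat 0 (sh d f) := if_neg (by decide)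

lemma phiLetter_nil (d : Series) (i : Fin 2) (f : Series) : phiLetter d i f [] = 0 := by
  rcases fin2_cases i with h | h <;> subst h
  · rw [phiLetter_zero]; rfl
  · rw [phiLetter_one]; show lconcat 1 f [] + lconcat 0 (sh d f) [] = 0
    rw [lconcat_nil, lconcat_nil, add_zero]

lemma phi_cons0_at (d : Series) (ξ : Word) (f : Series) (j : Fin 2) (v : Word) :
    phi d (0 :: ξ) f (j :: v) = if j = 0 then phi d ξ f v else 0 := by
  rw [phi_cons, phiLetter_zero, lconcat_cons]

lemma phi_cons1_at (d : Series) (ξ : Word) (f : Series) (j : Fin 2) (v : Word) :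
    phi d (1 :: ξ) f (j :: v) =
      (if j = 1 then phi d ξ f v else 0) + (if j = 0 then sh d (phi d ξ f) v else 0) := by
  rw [phi_cons, phiLetter_one]
  show lconcat 1 _ (j :: v) + lconcat 0 _ (j :: v) = _
  rw [lconcat_cons, lconcat_cons]

/-! ### The degree-weight `δ` -/

/-- `δ(w) = 2 |w|_{x0} + |w|_{x1}` (so `degW w = δ w + 1`). -/
def dlt (w : Word) : ℕ := 2 * w.count 0 + w.count 1

lemma dlt_nil : dlt [] = 0 := rfl

lemma dlt_cons (i : Fin 2) (w : Word) :
    dlt (i :: w) = (if i = 0 then 2 else 1) + dlt w := by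
  rcases fin2_cases i with h | h <;> subst h <;>
    simp [dlt, List.count_cons] <;> ring

lemma degW_eq (w : Word) : degW w = dlt w + 1 := rfl

/-! ### Vanishing lemmas for the shuffle -/

lemma shuffleFn_vanish_gen (wt : Fin 2 → ℕ) (μ : Word → ℕ) (hw1 : ∀ i, 1 ≤ wt i)
    (hμ0 : μ [] = 0) (hcons : ∀ i u, μ (i :: u) = wt i + μ u) :
    ∀ (w : Word) (N : ℕ) (f g : Series), (∀ u, μ u < N → g u = 0) → μ w < N →
      shuffleFn f g w = 0 := by
  intro w
  induction w with
  | nil =>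
    intro N f g hg hlt
    rw [shuffleFn_nil, hg [] (by omega), mul_zero]
  | cons i v ih =>
    intro N f g hg hlt
    have hiv := hcons i v
    have hwi := hw1 i
    rw [shuffleFn_cons]
    have h1 : shuffleFn (lshift i f) g v = 0 := ih N _ _ hg (by omega)
    have h2 : shuffleFn f (lshift i g) v = 0 := by
      refine ih (N - wt i) f (lshift i g) ?_ (by omega)
      intro u hu
      have hiu := hcons i u
      show g (i :: u) = 0
      exact hg _ (by omega)
    rw [h1, h2, add_zero]

lemma shuffleFn_vanish_len {N : ℕ} (f g : Series) (hg : ∀ u : Word, u.length < N → g u = 0)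
    {w : Word} (hw : w.length < N) : shuffleFn f g w = 0 :=
  shuffleFn_vanish_gen (fun _ => 1) List.length (fun _ => le_rfl) rfl
    (fun i u => by simp [Nat.add_comm]) w N f g hg hw

lemma shuffleFn_vanish_dlt {N : ℕ} (f g : Series) (hg : ∀ u : Word, dlt u < N → g u = 0)
    {w : Word} (hw : dlt w < N) : shuffleFn f g w = 0 :=
  shuffleFn_vanish_gen (fun i => if i = 0 then 2 else 1) dlt
    (fun i => by rcases fin2_cases i with h | h <;> subst h <;> simp) rfl dlt_cons w N f g hg hw

/-! ### Vanishing and diagonal lemmas for `phi` -/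

lemma phi_vanish_len : ∀ (ξ : Word) (d : Series) (w : Word), w.length < ξ.length →
    phi d ξ one w = 0 := by
  intro ξ
  induction ξ with
  | nil => intro d w h; simp at h
  | cons i ξ ih =>
    intro d w h
    match w with
    | [] => rw [phi_cons]; exact phiLetter_nil d i _
    | j :: v =>
      have hv : v.length < ξ.length := by simpa using h
      rcases fin2_cases i with hi | hi <;> subst hi
      · rw [phi_cons0_at]
        split
        · exact ih d v hv
        · rfl
      · rw [phi_cons1_at]
        have h2 : (if j = 0 then sh d (phi d ξ one) v else 0) = 0 := by
          split
          · exact shuffleFn_vanish_len d _ (fun u hu => ih d u hu) hv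
          · rfl
        rw [h2, add_zero]
        split
        · exact ih d v hv
        · rfl

lemma phi_vanish_dlt : ∀ (ξ : Word) (d : Series) (w : Word), dlt w < dlt ξ →
    phi d ξ one w = 0 := by
  intro ξ
  induction ξ with
  | nil => intro d w h; rw [dlt_nil] at h; omega
  | cons i ξ ih =>
    intro d w h
    match w with
    | [] => rw [phi_cons]; exact phiLetter_nil d i _
    | j :: v =>
      have hjv := dlt_cons j v
      have hiξ := dlt_cons i ξ
      rcases fin2_cases i with hi | hi <;> subst hi
      · rw [phi_cons0_at]
        split_ifs with hj
        · subst hj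
          refine ih d v ?_
          simp at hjv hiξ
          omega
        · rfl
      · rw [phi_cons1_at]
        simp at hiξ
        have h2 : (if j = 0 then sh d (phi d ξ one) v else 0) = 0 := by
          split_ifs with hj
          · subst hj
            simp at hjv
            exact shuffleFn_vanish_dlt d _ (fun u hu => ih d u hu) (by omega)
          · rfl
        rw [h2, add_zero]
        split_ifs with hj
        · subst hj
          simp at hjv
          exact ih d v (by omega)
        · rfl

lemma phi_diag : ∀ (ξ : Word) (d : Series), phi d ξ one ξ = 1 := by
  intro ξ
  induction ξ with
  | nil => intro d; exact one_nil
  | cons i ξ ih =>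
    intro d
    rcases fin2_cases i with hi | hi <;> subst hi
    · rw [phi_cons0_at, if_pos rfl]; exact ih d
    · rw [phi_cons1_at, if_pos rfl, if_neg (by decide : ¬ (1 : Fin 2) = 0), add_zero]
      exact ih d

lemma phi_offdiag : ∀ (ξ : Word) (d : Series) (w : Word), dlt w = dlt ξ → w ≠ ξ →
    phi d ξ one w = 0 := by
  intro ξ
  induction ξ with
  | nil =>
    intro d w h hne
    exfalso
    apply hne
    match w with
    | [] => rfl
    | j :: v =>
      have := dlt_cons j v
      rw [dlt_nil] at h
      split at this <;> omega
  | cons i ξ ih =>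
    intro d w h hne
    match w with
    | [] => rw [phi_cons]; exact phiLetter_nil d i _
    | j :: v =>
      have hjv := dlt_cons j v
      have hiξ := dlt_cons i ξ
      rcases fin2_cases i with hi | hi <;> subst hi
      · rw [phi_cons0_at]
        split_ifs with hj
        · subst hj
          simp at hjv hiξ
          refine ih d v (by omega) ?_
          intro hveq; exact hne (by rw [hveq])
        · rfl
      · rw [phi_cons1_at]
        simp at hiξ
        have h2 : (if j = 0 then sh d (phi d ξ one) v else 0) = 0 := by
          split_ifs with hj
          · subst hj
            simp at hjv
            refine shuffleFn_vanish_dlt d _ (fun u hu => ?_) (show dlt v < dlt ξ by omega)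
            rcases lt_trichotomy (dlt u) (dlt ξ) with h3 | h3 | h3
            · exact phi_vanish_dlt ξ d u h3
            · rcases eq_or_ne u ξ with h4 | h4
              · exfalso; subst h4; omega
              · exact ih d u h3 h4
            · exact phi_vanish_dlt ξ d u (by omega)
          · rfl
        rw [h2, add_zero]
        split_ifs with hj
        · subst hj
          simp at hjv
          refine ih d v (by omega) ?_
          intro hveq; exact hne (by rw [hveq])
        · rfl

end Paper
namespace Paper

/-! ### Linearity of the shuffle -/

lemma shuffleFn_zero_right : ∀ (w : Word) (f : Series), shuffleFn f (fun _ => 0) w = 0 := by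
  intro w
  induction w with
  | nil => intro f; rw [shuffleFn_nil, mul_zero]
  | cons i v ih =>
    intro f
    rw [shuffleFn_cons]
    have h1 : shuffleFn (lshift i f) (fun _ => (0:ℝ)) v = 0 := ih _
    have h2 : shuffleFn f (lshift i fun _ => (0:ℝ)) v = 0 := ih f
    rw [h1, h2, add_zero]

lemma shuffleFn_zero_left : ∀ (w : Word) (g : Series), shuffleFn (fun _ => 0) g w = 0 := by
  intro w
  induction w with
  | nil => intro g; rw [shuffleFn_nil, zero_mul]
  | cons i v ih =>
    intro g
    rw [shuffleFn_cons]
    have h1 : shuffleFn (lshift i fun _ => (0:ℝ)) g v = 0 := ih g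
    have h2 : shuffleFn (fun _ => (0:ℝ)) (lshift i g) v = 0 := ih _
    rw [h1, h2, add_zero]

lemma shuffleFn_add_right : ∀ (w : Word) (f g₁ g₂ : Series),
    shuffleFn f (fun u => g₁ u + g₂ u) w = shuffleFn f g₁ w + shuffleFn f g₂ w := by
  intro w
  induction w with
  | nil => intro f g₁ g₂; rw [shuffleFn_nil, shuffleFn_nil, shuffleFn_nil]; ring
  | cons i v ih =>
    intro f g₁ g₂
    rw [shuffleFn_cons, shuffleFn_cons, shuffleFn_cons]
    have h1 : shuffleFn (lshift i f) (fun u => g₁ u + g₂ u) v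
        = shuffleFn (lshift i f) g₁ v + shuffleFn (lshift i f) g₂ v := ih _ g₁ g₂
    have h2 : shuffleFn f (lshift i fun u => g₁ u + g₂ u) v
        = shuffleFn f (lshift i g₁) v + shuffleFn f (lshift i g₂) v := ih f _ _
    rw [h1, h2]; ring

lemma shuffleFn_mul_right (r : ℝ) : ∀ (w : Word) (f g : Series),
    shuffleFn f (fun u => r * g u) w = r * shuffleFn f g w := by
  intro w
  induction w with
  | nil => intro f g; rw [shuffleFn_nil, shuffleFn_nil]; ring
  | cons i v ih =>
    intro f g
    rw [shuffleFn_cons, shuffleFn_cons]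
    have h1 : shuffleFn (lshift i f) (fun u => r * g u) v
        = r * shuffleFn (lshift i f) g v := ih _ g
    have h2 : shuffleFn f (lshift i fun u => r * g u) v
        = r * shuffleFn f (lshift i g) v := ih f _
    rw [h1, h2]; ring

lemma shuffleFn_mul_left (r : ℝ) : ∀ (w : Word) (f g : Series),
    shuffleFn (fun u => r * f u) g w = r * shuffleFn f g w := by
  intro w
  induction w with
  | nil => intro f g; rw [shuffleFn_nil, shuffleFn_nil]; ring
  | cons i v ih =>
    intro f g
    rw [shuffleFn_cons, shuffleFn_cons]
    have h1 : shuffleFn (lshift i fun u => r * f u) g v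
        = r * shuffleFn (lshift i f) g v := ih _ g
    have h2 : shuffleFn (fun u => r * f u) (lshift i g) v
        = r * shuffleFn f (lshift i g) v := ih f _
    rw [h1, h2]; ring

lemma shuffleFn_neg_left : ∀ (w : Word) (f g : Series),
    shuffleFn (fun u => -(f u)) g w = -shuffleFn f g w := by
  intro w
  induction w with
  | nil => intro f g; rw [shuffleFn_nil, shuffleFn_nil]; ring
  | cons i v ih =>
    intro f g
    rw [shuffleFn_cons, shuffleFn_cons]
    have h1 : shuffleFn (lshift i fun u => -(f u)) g v
        = -shuffleFn (lshift i f) g v := ih _ g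
    have h2 : shuffleFn (fun u => -(f u)) (lshift i g) v
        = -shuffleFn f (lshift i g) v := ih f _
    rw [h1, h2]; ring

lemma shuffleFn_congr_right : ∀ (w : Word) (f g g' : Series),
    (∀ u : Word, u.length ≤ w.length → g u = g' u) → shuffleFn f g w = shuffleFn f g' w := by
  intro w
  induction w with
  | nil => intro f g g' h; rw [shuffleFn_nil, shuffleFn_nil, h [] le_rfl]
  | cons i v ih =>
    intro f g g' h
    rw [shuffleFn_cons, shuffleFn_cons]
    have h1 : shuffleFn (lshift i f) g v = shuffleFn (lshift i f) g' v :=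
      ih _ g g' fun u hu => h u (by simp; omega)
    have h2 : shuffleFn f (lshift i g) v = shuffleFn f (lshift i g') v := by
      refine ih f _ _ fun u hu => ?_
      show g (i :: u) = g' (i :: u)
      exact h _ (by simp; omega)
    rw [h1, h2]

lemma shuffleFn_sum_right {α : Type*} (s : Finset α) (w : Word) (f : Series)
    (G : α → Series) :
    shuffleFn f (fun u => ∑ x ∈ s, G x u) w = ∑ x ∈ s, shuffleFn f (G x) w := by
  induction s using Finset.cons_induction with
  | empty => simpa using shuffleFn_zero_right w f
  | cons a s ha ih =>
    rw [Finset.sum_cons]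
    have : shuffleFn f (fun u => G a u + ∑ x ∈ s, G x u) w
        = shuffleFn f (G a) w + shuffleFn f (fun u => ∑ x ∈ s, G x u) w :=
      shuffleFn_add_right w f _ _
    simp only [Finset.sum_cons]
    rw [this, ih]

/-! ### The finite sets of words of bounded length -/

def Wle : ℕ → Finset Word
  | 0 => {[]}
  | n + 1 => insert [] (((Wle n) ×ˢ (Finset.univ : Finset (Fin 2))).image fun p => p.2 :: p.1)

lemma mem_Wle : ∀ (n : ℕ) (ξ : Word), ξ ∈ Wle n ↔ ξ.length ≤ n := by
  intro n
  induction n with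
  | zero =>
    intro ξ
    simp only [Wle, Finset.mem_singleton]
    constructor
    · intro h; subst h; simp
    · intro h; exact List.length_eq_zero_iff.1 (by omega)
  | succ n ih =>
    intro ξ
    simp only [Wle, Finset.mem_insert, Finset.mem_image, Finset.mem_product]
    constructor
    · rintro (rfl | ⟨⟨ξ', i⟩, ⟨h1, _⟩, rfl⟩)
      · simp
      · simp only [List.length_cons]
        have := (ih ξ').1 h1
        omega
    · intro h
      match ξ with
      | [] => exact Or.inl rfl
      | j :: v =>
        refine Or.inr ⟨⟨v, j⟩, ⟨(ih v).2 (by simp at h; omega), Finset.mem_univ _⟩, rfl⟩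

lemma sum_Wle_succ (n : ℕ) (F : Word → ℝ) :
    ∑ ξ ∈ Wle (n + 1), F ξ = F [] + ∑ ξ ∈ Wle n, (F (0 :: ξ) + F (1 :: ξ)) := by
  show ∑ ξ ∈ insert [] _, F ξ = _
  rw [Finset.sum_insert]
  · congr 1
    rw [Finset.sum_image]
    · rw [Finset.sum_product]
      refine Finset.sum_congr rfl fun ξ _ => ?_
      rw [Fin.sum_univ_two]
    · rintro ⟨ξ1, i1⟩ h1 ⟨ξ2, i2⟩ h2 h
      simp only [List.cons.injEq] at h
      simp [h.1, h.2]
  · simp only [Finset.mem_image, not_exists]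
    rintro ⟨ξ', i⟩ ⟨-, h⟩
    simp at h

/-! ### `mcomp` as a finite sum, and its recursions -/

lemma mcomp_eq_sum (t d : Series) (w : Word) (s : Finset Word)
    (hs : ∀ ξ : Word, ξ.length ≤ w.length → ξ ∈ s) :
    mcomp t d w = ∑ ξ ∈ s, t ξ * phi d ξ one w := by
  refine tsum_eq_sum fun ξ hξ => ?_
  have hlen : w.length < ξ.length := by
    by_contra hc
    exact hξ (hs ξ (by omega))
  rw [phi_vanish_len ξ d w hlen, mul_zero]

lemma mcomp_nil (t d : Series) : mcomp t d [] = t [] := by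
  rw [mcomp_eq_sum t d [] {[]} (fun ξ h => by
    simp only [Finset.mem_singleton]; exact List.length_eq_zero_iff.1 (by simpa using h))]
  rw [Finset.sum_singleton, phi_nil', one_nil, mul_one]

lemma mcomp_cons1 (t d : Series) (v : Word) :
    mcomp t d (1 :: v) = mcomp (lshift 1 t) d v := by
  rw [mcomp_eq_sum t d (1 :: v) (Wle (v.length + 1))
      (fun ξ h => (mem_Wle _ _).2 (by simpa using h)),
    sum_Wle_succ,
    mcomp_eq_sum (lshift 1 t) d v (Wle v.length) (fun ξ h => (mem_Wle _ _).2 h)]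
  rw [phi_nil', one_cons, mul_zero, zero_add]
  refine Finset.sum_congr rfl fun ξ _ => ?_
  rw [phi_cons0_at, phi_cons1_at]
  rw [if_neg (by decide : ¬ (1 : Fin 2) = 0), if_pos rfl, if_neg (by decide : ¬ (1 : Fin 2) = 0)]
  show t (0 :: ξ) * 0 + t (1 :: ξ) * (phi d ξ one v + 0) = lshift 1 t ξ * phi d ξ one v
  rw [mul_zero, zero_add, add_zero]
  rfl

lemma mcomp_cons0 (t d : Series) (v : Word) :
    mcomp t d (0 :: v) = mcomp (lshift 0 t) d v + sh d (mcomp (lshift 1 t) d) v := by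
  rw [mcomp_eq_sum t d (0 :: v) (Wle (v.length + 1))
      (fun ξ h => (mem_Wle _ _).2 (by simpa using h)),
    sum_Wle_succ,
    mcomp_eq_sum (lshift 0 t) d v (Wle v.length) (fun ξ h => (mem_Wle _ _).2 h)]
  rw [phi_nil', one_cons, mul_zero, zero_add]
  have hsh : sh d (mcomp (lshift 1 t) d) v
      = ∑ ξ ∈ Wle v.length, t (1 :: ξ) * sh d (phi d ξ one) v := by
    show shuffleFn d (mcomp (lshift 1 t) d) v = _
    rw [shuffleFn_congr_right v d _
        (fun u => ∑ ξ ∈ Wle v.length, t (1 :: ξ) * phi d ξ one u)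
        (fun u hu => mcomp_eq_sum (lshift 1 t) d u (Wle v.length)
          (fun ξ hl => (mem_Wle _ _).2 (by omega)))]
    rw [shuffleFn_sum_right]
    refine Finset.sum_congr rfl fun ξ _ => ?_
    exact shuffleFn_mul_right (t (1 :: ξ)) v d (phi d ξ one)
  rw [hsh, ← Finset.sum_add_distrib]
  refine Finset.sum_congr rfl fun ξ _ => ?_
  rw [phi_cons0_at, phi_cons1_at]
  rw [if_pos rfl, if_neg (by decide : ¬ (0 : Fin 2) = 1), if_pos rfl]
  show t (0 :: ξ) * phi d ξ one v + t (1 :: ξ) * (0 + sh d (phi d ξ one) v)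
      = lshift 0 t ξ * phi d ξ one v + t (1 :: ξ) * sh d (phi d ξ one) v
  rw [zero_add]
  rfl

lemma mcomp_mul_left (r : ℝ) (t d : Series) :
    mcomp (fun ξ => r * t ξ) d = fun w => r * mcomp t d w := by
  funext w
  show ∑' ξ : Word, (r * t ξ) * phi d ξ one w = r * ∑' ξ : Word, t ξ * phi d ξ one w
  rw [← tsum_mul_left]
  exact tsum_congr fun ξ => by ring

end Paper
namespace Paper

/-! ### The ascending-factorial series `cm` and the prefix-degree products `dm` -/

def ascFact : ℕ → ℕ → ℕ
  | _, 0 => 1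
  | m, k + 1 => (m + 1) * ascFact (m + 1) k

lemma factorial_mul_ascFact : ∀ (k m : ℕ), m.factorial * ascFact m k = (m + k).factorial := by
  intro k
  induction k with
  | zero => intro m; simp [ascFact]
  | succ k ih =>
    intro m
    show m.factorial * ((m + 1) * ascFact (m + 1) k) = _
    have : m.factorial * ((m + 1) * ascFact (m + 1) k)
        = (m + 1).factorial * ascFact (m + 1) k := by
      rw [Nat.factorial_succ]; ring
    rw [this, ih (m + 1)]
    congr 1
    omega

lemma ascFact_zero (k : ℕ) : ascFact 0 k = k.factorial := by
  have := factorial_mul_ascFact k 0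
  simpa [Nat.factorial] using this

/-- The series supported on `1^k` with coefficients the ascending factorials
`(m+1)(m+2)⋯(m+k)`. -/
def cm (m : ℕ) : Series := fun w =>
  if w = List.replicate w.length 1 then (ascFact m w.length : ℝ) else 0

lemma cm_nil (m : ℕ) : cm m [] = 1 := by simp [cm, ascFact]

lemma cm_cons1 (m : ℕ) (v : Word) : cm m (1 :: v) = (m + 1) * cm (m + 1) v := by
  simp only [cm, List.length_cons]
  by_cases hv : v = List.replicate v.length 1
  · rw [if_pos (by rw [List.replicate_succ]; exact congrArg _ hv), if_pos hv]
    show ((ascFact m (v.length + 1) : ℕ) : ℝ) = _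
    rw [show ascFact m (v.length + 1) = (m + 1) * ascFact (m + 1) v.length from rfl]
    push_cast
    ring
  · rw [if_neg, if_neg hv, mul_zero]
    rw [List.replicate_succ]
    intro h
    exact hv (by injection h)

lemma cm_cons0 (m : ℕ) (v : Word) : cm m (0 :: v) = 0 := by
  simp only [cm, List.length_cons]
  rw [if_neg]
  rw [List.replicate_succ]
  intro h
  injection h with h1 h2
  exact absurd h1 (by decide)

lemma lshift_cm1 (m : ℕ) : lshift 1 (cm m) = fun v => (m + 1) * cm (m + 1) v :=
  funext fun v => cm_cons1 m v

lemma lshift_cm0 (m : ℕ) : lshift 0 (cm m) = fun _ => 0 :=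
  funext fun v => cm_cons0 m v

lemma ferfera_eq_cm0 : ferfera = cm 0 := by
  funext w
  simp only [ferfera, cm, ascFact_zero]

lemma sh_cm : ∀ (w : Word) (a b : ℕ), shuffleFn (cm a) (cm b) w = cm (a + b + 1) w := by
  intro w
  induction w with
  | nil => intro a b; rw [shuffleFn_nil, cm_nil, cm_nil, cm_nil, one_mul]
  | cons i v ih =>
    intro a b
    rw [shuffleFn_cons]
    rcases fin2_cases i with hi | hi <;> subst hi
    · rw [lshift_cm0, lshift_cm0, shuffleFn_zero_left, shuffleFn_zero_right, cm_cons0, add_zero]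
    · rw [lshift_cm1, lshift_cm1, shuffleFn_mul_left, shuffleFn_mul_right, cm_cons1]
      rw [ih (a + 1) b, ih a (b + 1)]
      rw [show a + 1 + b + 1 = a + b + 1 + 1 from by omega,
        show a + (b + 1) + 1 = a + b + 1 + 1 from by omega]
      push_cast
      ring

/-- `dm m η = ∏_{q ⊊ η} (δ(q) + m + 1)`, defined by left recursion. -/
def dm : ℕ → Word → ℝ
  | _, [] => 1
  | m, i :: ξ => (m + 1) * dm (m + if i = 0 then 2 else 1) ξ

lemma dm_nil (m : ℕ) : dm m [] = 1 := rfl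

lemma lshift_dm1 (m : ℕ) : lshift 1 (dm m) = fun ξ => (m + 1) * dm (m + 1) ξ := by
  funext ξ
  show dm m (1 :: ξ) = _
  rw [show dm m (1 :: ξ) = (m + 1) * dm (m + if (1 : Fin 2) = 0 then 2 else 1) ξ from rfl]
  norm_num

lemma lshift_dm0 (m : ℕ) : lshift 0 (dm m) = fun ξ => (m + 1) * dm (m + 2) ξ := by
  funext ξ
  show dm m (0 :: ξ) = _
  rw [show dm m (0 :: ξ) = (m + 1) * dm (m + if (0 : Fin 2) = 0 then 2 else 1) ξ from rfl]
  norm_num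

lemma dm_append : ∀ (η : Word) (m : ℕ) (i : Fin 2),
    dm m (η ++ [i]) = ((dlt η + m + 1 : ℕ) : ℝ) * dm m η := by
  intro η
  induction η with
  | nil =>
    intro m i
    have h1 : dm m [i] = ((m : ℝ) + 1) := by
      rw [show dm m [i] = (m + 1) * dm (m + if i = 0 then 2 else 1) [] from rfl, dm_nil, mul_one]
    rw [show ([] ++ [i] : Word) = [i] from rfl, h1, dm_nil, dlt_nil]
    push_cast
    ring
  | cons j η ih =>
    intro m i
    show dm m (j :: (η ++ [i])) = _
    rw [show dm m (j :: (η ++ [i]))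
        = (m + 1) * dm (m + if j = 0 then 2 else 1) (η ++ [i]) from rfl]
    rw [ih]
    rw [show dm m (j :: η) = (m + 1) * dm (m + if j = 0 then 2 else 1) η from rfl]
    have hd := dlt_cons j η
    rcases fin2_cases j with hj | hj <;> subst hj <;> simp at hd <;> rw [hd] <;> push_cast <;> ring

/-! ### The main combinatorial identity: `(dm m) ∘̃ (−ferfera) = cm m` -/

lemma mcomp_dm : ∀ (n : ℕ) (w : Word), w.length ≤ n → ∀ m : ℕ,
    mcomp (dm m) (-ferfera) w = cm m w := by
  intro n
  induction n with
  | zero =>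
    intro w hw m
    have : w = [] := List.length_eq_zero_iff.1 (by omega)
    subst this
    rw [mcomp_nil, dm_nil, cm_nil]
  | succ n ih =>
    intro w hw m
    match w with
    | [] => rw [mcomp_nil, dm_nil, cm_nil]
    | i :: v =>
      have hv : v.length ≤ n := by simpa using hw
      rcases fin2_cases i with hi | hi <;> subst hi
      · -- letter x0
        rw [mcomp_cons0, lshift_dm0, lshift_dm1, mcomp_mul_left, mcomp_mul_left]
        beta_reduce
        rw [ih v hv (m + 2), cm_cons0]
        have hsh : sh (-ferfera) (fun w => ((m:ℝ) + 1) * mcomp (dm (m + 1)) (-ferfera) w) v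
            = ((m:ℝ) + 1) * shuffleFn (-ferfera) (mcomp (dm (m + 1)) (-ferfera)) v :=
          shuffleFn_mul_right _ v _ _
        rw [hsh]
        rw [shuffleFn_congr_right v (-ferfera) _ (cm (m + 1))
          (fun u hu => ih u (le_trans hu hv) (m + 1))]
        have hneg : shuffleFn (-ferfera) (cm (m + 1)) v
            = -shuffleFn ferfera (cm (m + 1)) v := by
          have : (-ferfera) = fun u => -(ferfera u) := rfl
          rw [this, shuffleFn_neg_left]
        rw [hneg, ferfera_eq_cm0, sh_cm v 0 (m + 1)]
        rw [show 0 + (m + 1) + 1 = m + 2 from by omega]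
        ring
      · -- letter x1
        rw [mcomp_cons1, lshift_dm1, mcomp_mul_left]
        beta_reduce
        rw [ih v hv (m + 1), cm_cons1]

end Paper
namespace Paper

/-! ### `H`-valued mirror of the series operations, giving the coproduct legs -/

def lshiftH (i : Fin 2) (f : Word → H) : Word → H := fun w => f (i :: w)

def lconcatH (i : Fin 2) (f : Word → H) : Word → H := fun w =>
  match w with
  | [] => 0
  | j :: v => if j = i then f v else 0

def oneH : Word → H := fun w => if w = [] then 1 else 0

def shuffleFnH : (Word → H) → (Word → H) → Word → H
  | f, g, [] => f [] * g []
  | f, g, i :: w => shuffleFnH (lshiftH i f) g w + shuffleFnH f (lshiftH i g) w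

def genH : Word → H := fun ξ => aw ξ

def phiH : Word → (Word → H) → Word → H
  | [], f => f
  | i :: ξ, f =>
    if i = 0 then lconcatH 0 (phiH ξ f)
    else fun w => lconcatH 1 (phiH ξ f) w + lconcatH 0 (shuffleFnH genH (phiH ξ f)) w

/-- The polynomial `P_{ξ,η} ∈ H` with `P_{ξ,η}(d) = φ_d(ξ)(1)(η)`. -/
def PP (ξ η : Word) : H := phiH ξ oneH η

lemma evalS_aw (d : Series) (ξ : Word) : evalS d (aw ξ) = d ξ :=
  MvPolynomial.aeval_X d ξ

lemma evalS_shuffleFnH (d : Series) : ∀ (w : Word) (f g : Word → H),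
    evalS d (shuffleFnH f g w)
      = shuffleFn (fun u => evalS d (f u)) (fun u => evalS d (g u)) w := by
  intro w
  induction w with
  | nil => intro f g; rw [show shuffleFnH f g [] = f [] * g [] from rfl, shuffleFn_nil, map_mul]
  | cons i v ih =>
    intro f g
    rw [show shuffleFnH f g (i :: v)
        = shuffleFnH (lshiftH i f) g v + shuffleFnH f (lshiftH i g) v from rfl,
      shuffleFn_cons, map_add, ih, ih]
    rfl

lemma evalS_lconcatH (d : Series) (i : Fin 2) (f : Word → H) (w : Word) :
    evalS d (lconcatH i f w) = lconcat i (fun u => evalS d (f u)) w := by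
  match w with
  | [] => exact map_zero _
  | j :: v =>
    rw [show lconcatH i f (j :: v) = if j = i then f v else 0 from rfl, lconcat_cons]
    split
    · rfl
    · exact map_zero _

lemma evalS_oneH (d : Series) : (fun u => evalS d (oneH u)) = one := by
  funext w
  show evalS d (if w = [] then 1 else 0) = one w
  match w with
  | [] => rw [if_pos rfl, one_nil, map_one]
  | j :: v => rw [if_neg (by simp), one_cons, map_zero]

lemma evalS_phiH (d : Series) : ∀ (ξ : Word) (f : Word → H) (w : Word),
    evalS d (phiH ξ f w) = phi d ξ (fun u => evalS d (f u)) w := by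
  intro ξ
  induction ξ with
  | nil => intro f w; rfl
  | cons i ξ ih =>
    intro f w
    have hfun : (fun u => evalS d (phiH ξ f u)) = phi d ξ (fun u => evalS d (f u)) :=
      funext fun u => ih f u
    rcases fin2_cases i with hi | hi <;> subst hi
    · rw [show phiH (0 :: ξ) f = lconcatH 0 (phiH ξ f) from if_pos rfl,
        phi_cons, phiLetter_zero, evalS_lconcatH, hfun]
    · rw [show phiH (1 :: ξ) f
          = fun w => lconcatH 1 (phiH ξ f) w + lconcatH 0 (shuffleFnH genH (phiH ξ f)) w
          from if_neg (by decide), phi_cons, phiLetter_one]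
      show evalS d (lconcatH 1 (phiH ξ f) w + lconcatH 0 (shuffleFnH genH (phiH ξ f)) w)
          = lconcat 1 (phi d ξ fun u => evalS d (f u)) w
            + lconcat 0 (sh d (phi d ξ fun u => evalS d (f u))) w
      rw [map_add, evalS_lconcatH, evalS_lconcatH, hfun]
      congr 1
      have h2 : (fun u => evalS d (shuffleFnH genH (phiH ξ f) u))
          = sh d (phi d ξ fun u => evalS d (f u)) := by
        funext u
        rw [evalS_shuffleFnH, hfun]
        show shuffleFn (fun u => evalS d (genH u)) _ u = shuffleFn d _ u
        congr 1
        funext v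
        exact evalS_aw d v
      rw [h2]

lemma evalS_PP (d : Series) (ξ η : Word) : evalS d (PP ξ η) = phi d ξ one η := by
  rw [PP, evalS_phiH, evalS_oneH]

/-! ### The explicit coproduct element -/

def DD (η : Word) : H ⊗[ℝ] H :=
  (∑ ξ ∈ Wle η.length, aw ξ ⊗ₜ[ℝ] PP ξ η) + 1 ⊗ₜ[ℝ] aw η

lemma evalPair_tmul (c d : Series) (p q : H) :
    evalPair c d (p ⊗ₜ[ℝ] q) = evalS c p * evalS d q := by
  simp [evalPair]

lemma evalPair_DD (c d : Series) (η : Word) :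
    evalPair c d (DD η) = mcomp c d η + d η := by
  rw [DD, map_add, map_sum]
  simp only [evalPair_tmul, evalS_PP, evalS_aw, map_one, one_mul]
  rw [mcomp_eq_sum c d η (Wle η.length) (fun ξ hl => (mem_Wle _ _).2 hl)]

/-! ### Separation of points of `H ⊗ H` by pairs of characters -/

lemma evalS_toRingHom_eq_eval (c : Series) (p : H) :
    (evalS c : H →ₐ[ℝ] ℝ) p = MvPolynomial.eval c p := rfl

lemma evalPair_eq_eval_map (c d : Series) (z : H ⊗[ℝ] H) :
    evalPair c d z = MvPolynomial.eval d
      (MvPolynomial.map (evalS c : H →ₐ[ℝ] ℝ).toRingHom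
        ((MvPolynomial.algebraTensorAlgEquiv ℝ H) z)) := by
  induction z using TensorProduct.induction_on with
  | zero => simp
  | tmul p q =>
    rw [evalPair_tmul, MvPolynomial.algebraTensorAlgEquiv_tmul, MvPolynomial.smul_eq_C_mul,
      map_mul, MvPolynomial.map_C, MvPolynomial.map_map]
    have hcomp : ((evalS c : H →ₐ[ℝ] ℝ).toRingHom).comp (algebraMap ℝ H) = RingHom.id ℝ :=
      RingHom.ext fun r => by
        show evalS c (algebraMap ℝ H r) = r
        simp
    rw [hcomp, MvPolynomial.map_id, map_mul, MvPolynomial.eval_C]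
    rfl
  | add x y hx hy =>
    rw [map_add, hx, hy, map_add, map_add, map_add]

lemma sep {z z' : H ⊗[ℝ] H} (h : ∀ c d : Series, evalPair c d z = evalPair c d z') :
    z = z' := by
  have key : ∀ c : Series,
      MvPolynomial.map (evalS c : H →ₐ[ℝ] ℝ).toRingHom
        ((MvPolynomial.algebraTensorAlgEquiv ℝ H) z)
      = MvPolynomial.map (evalS c : H →ₐ[ℝ] ℝ).toRingHom
        ((MvPolynomial.algebraTensorAlgEquiv ℝ H) z') := by
    intro c
    apply MvPolynomial.funext
    intro d
    rw [← evalPair_eq_eval_map, ← evalPair_eq_eval_map]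
    exact h c d
  have hΨ : (MvPolynomial.algebraTensorAlgEquiv ℝ H) z
      = (MvPolynomial.algebraTensorAlgEquiv ℝ H) z' := by
    apply MvPolynomial.ext
    intro m
    apply MvPolynomial.funext
    intro c
    have h2 := congrArg (MvPolynomial.coeff m) (key c)
    rw [MvPolynomial.coeff_map, MvPolynomial.coeff_map] at h2
    exact h2
  exact (MvPolynomial.algebraTensorAlgEquiv ℝ H).injective hΨ

/-! ### Consequences of the coproduct and antipode axioms -/

lemma Delta_eq (Δ : H →ₐ[ℝ] (H ⊗[ℝ] H)) (hΔ : IsFBCoproduct Δ) (η : Word) :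
    Δ (aw η) = DD η :=
  sep fun c d => by rw [hΔ η c d, evalPair_DD]

lemma counit_aw (η : Word) : counit (aw η) = 0 := by
  rw [show counit (aw η) = evalS 0 (aw η) from rfl, evalS_aw]
  rfl

lemma S_one (Δ : H →ₐ[ℝ] (H ⊗[ℝ] H)) (S : H →ₗ[ℝ] H) (hS : IsAntipode Δ S) :
    S (1 : H) = 1 := by
  have h := hS.1 1
  rw [map_one, Algebra.TensorProduct.one_def, TensorProduct.map_tmul, LinearMap.mul'_apply,
    LinearMap.id_coe, id_eq, mul_one] at h
  rw [show counit (1 : H) = 1 from map_one counit, one_smul] at h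
  exact h

lemma EQN_psi (Δ : H →ₐ[ℝ] (H ⊗[ℝ] H)) (hΔ : IsFBCoproduct Δ)
    (S : H →ₗ[ℝ] H) (hS : IsAntipode Δ S) (η : Word) :
    ∑ ξ ∈ Wle η.length, evalS (-ferfera) (S (aw ξ)) * phi (-ferfera) ξ one η
      + (-ferfera) η = 0 := by
  have h := hS.1 (aw η)
  rw [Delta_eq Δ hΔ η] at h
  simp only [DD, map_add, map_sum, TensorProduct.map_tmul, LinearMap.mul'_apply,
    LinearMap.id_coe, id_eq] at h
  rw [S_one Δ S hS, one_mul, counit_aw, zero_smul] at h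
  have h2 := congrArg (evalS (-ferfera)) h
  rw [map_add, map_sum, map_zero] at h2
  simp only [map_mul, evalS_PP, evalS_aw] at h2
  exact h2

lemma EQN_dm (η : Word) :
    ∑ ξ ∈ Wle η.length, dm 0 ξ * phi (-ferfera) ξ one η + (-ferfera) η = 0 := by
  have h := mcomp_dm η.length η le_rfl 0
  rw [mcomp_eq_sum (dm 0) (-ferfera) η (Wle η.length) (fun ξ hl => (mem_Wle _ _).2 hl)] at h
  rw [h, ← ferfera_eq_cm0, Pi.neg_apply]
  ring

/-! ### Uniqueness of the solution of the triangular system -/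

lemma uniq (t : Series)
    (ht : ∀ η : Word,
      ∑ ξ ∈ Wle η.length, t ξ * phi (-ferfera) ξ one η + (-ferfera) η = 0) :
    ∀ η : Word, t η = dm 0 η := by
  set u : Series := fun ξ => t ξ - dm 0 ξ with hu_def
  have hu : ∀ η : Word, ∑ ξ ∈ Wle η.length, u ξ * phi (-ferfera) ξ one η = 0 := by
    intro η
    have h1 := ht η
    have h2 := EQN_dm η
    have h3 : ∑ ξ ∈ Wle η.length, u ξ * phi (-ferfera) ξ one η
        = ∑ ξ ∈ Wle η.length, t ξ * phi (-ferfera) ξ one η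
          - ∑ ξ ∈ Wle η.length, dm 0 ξ * phi (-ferfera) ξ one η := by
      rw [← Finset.sum_sub_distrib]
      exact Finset.sum_congr rfl fun ξ _ => by simp only [hu_def]; ring
    rw [h3]
    linarith
  have main : ∀ N : ℕ, ∀ η : Word, dlt η < N → u η = 0 := by
    intro N
    induction N with
    | zero => intro η h; omega
    | succ N ih =>
      intro η hη
      have hmem : η ∈ Wle η.length := (mem_Wle _ _).2 le_rfl
      have hsum := hu η
      rw [← Finset.add_sum_erase _ _ hmem, phi_diag, mul_one] at hsum
      have hz : ∀ ξ ∈ (Wle η.length).erase η, u ξ * phi (-ferfera) ξ one η = 0 := by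
        intro ξ hξ
        have hne : ξ ≠ η := Finset.ne_of_mem_erase hξ
        rcases lt_trichotomy (dlt ξ) (dlt η) with h | h | h
        · rw [ih ξ (by omega), zero_mul]
        · rw [phi_offdiag ξ (-ferfera) η h.symm (Ne.symm hne), mul_zero]
        · rw [phi_vanish_dlt ξ (-ferfera) η h, mul_zero]
      rw [Finset.sum_eq_zero hz, add_zero] at hsum
      exact hsum
  intro η
  have := main (dlt η + 1) η (by omega)
  have h4 : t η - dm 0 η = 0 := this
  linarith

end Paper
open Paper in
/-- Let `c = Σ_{k≥0} k! x1^k` be the Ferfera series.  Then for every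
word `η ∈ X*`, the antipode `S` of the output feedback Hopf algebra satisfies
`(S a_{η x1})(−c) = deg(a_η) · (S a_η)(−c)` and `(S a_{η x0})(−c) = deg(a_η) · (S a_η)(−c)`,
where `deg(a_η) = 2|η|_{x0} + |η|_{x1} + 1`. -/
theorem antipode_ferfera_recursion
    (Δ : H →ₐ[ℝ] (H ⊗[ℝ] H)) (hΔ : IsFBCoproduct Δ)
    (S : H →ₗ[ℝ] H) (hS : IsAntipode Δ S) :
    ∀ η : Word,
      evalS (-ferfera) (S (aw (η ++ [1]))) = (degW η : ℝ) * evalS (-ferfera) (S (aw η)) ∧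
      evalS (-ferfera) (S (aw (η ++ [0]))) = (degW η : ℝ) * evalS (-ferfera) (S (aw η)) := by
  have t_eq : ∀ ν : Word, evalS (-ferfera) (S (aw ν)) = dm 0 ν :=
    uniq _ (EQN_psi Δ hΔ S hS)
  intro η
  constructor <;> (rw [t_eq, t_eq, dm_append]; norm_num [degW_eq])
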